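/- arXiv:2512.00813 — 4 statements merged into one kernel-verified Lean document; each statement's English description precedes it below -/
import Mathlib

section
/- Let G and H be connected graphs, each with at least two vertices, and let W be a resolving set of the lexicographic product G∘H. Then for every vertex g of G, the set {h ∈ V(H) : (g,h) ∈ W} is a resolving set of H. -/
/-- The lexicographic product of two simple graphs. -/
def lexProd {α β : Type*} (G : SimpleGraph α) (H : SimpleGraph β) :
    SimpleGraph (α × β) where
  Adj p q := G.Adj p.1 q.1 ∨ (p.1 = q.1 ∧ H.Adj p.2 q.2)
  symm := ⟨by
    rintro ⟨g, h⟩ ⟨g', h'⟩ (hg | ⟨rfl, hh⟩)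
    · exact Or.inl hg.symm
    · exact Or.inr ⟨rfl, hh.symm⟩⟩
  loopless := ⟨by
    rintro ⟨g, h⟩ (hg | ⟨-, hh⟩)
    · exact G.irrefl hg
    · exact H.irrefl hh⟩

/-- `W` is a resolving set of `G`. -/
def IsResolvingSet {α : Type*} (G : SimpleGraph α) (W : Set α) : Prop :=
  ∀ x y : α, x ≠ y → ∃ z ∈ W, G.dist x z ≠ G.dist y z

/-- `S` is a locating set of `G`. -/
def IsLocatingSet {α : Type*} (G : SimpleGraph α) (S : Set α) : Prop :=
  ∀ u ∉ S, ∀ v ∉ S, u ≠ v → G.neighborSet u ∩ S ≠ G.neighborSet v ∩ S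

/-- `S` is a strictly locating set of `G`. -/
def IsStrictlyLocatingSet {α : Type*} (G : SimpleGraph α) (S : Set α) : Prop :=
  IsLocatingSet G S ∧ ∀ u ∉ S, G.neighborSet u ∩ S ≠ S

/-- `S` is a dominating set of `G`. -/
def IsDominatingSet {α : Type*} (G : SimpleGraph α) (S : Set α) : Prop :=
  ∀ v ∉ S, ∃ u ∈ S, G.Adj v u

/-- `u` and `v` are true twins in `G`. -/
def AreTrueTwins {α : Type*} (G : SimpleGraph α) (u v : α) : Prop :=
  G.Adj u v ∧ G.neighborSet u \ {v} = G.neighborSet v \ {u}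

/-- `u` and `v` are false twins in `G`. -/
def AreFalseTwins {α : Type*} (G : SimpleGraph α) (u v : α) : Prop :=
  u ≠ v ∧ ¬ G.Adj u v ∧ G.neighborSet u \ {v} = G.neighborSet v \ {u}

/-- The path on `n` vertices `0, 1, …, n-1` (vertex `i` represents the
vertex labelled `i+1` in `{1, …, n}`). -/
def PathG (n : ℕ) : SimpleGraph (Fin n) where
  Adj i j := (i : ℕ) + 1 = (j : ℕ) ∨ (j : ℕ) + 1 = (i : ℕ)
  symm := ⟨fun i j h => Or.symm h⟩
  loopless := ⟨fun i h => by rcases h with h | h <;> omega⟩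

/-- The cycle on `n` vertices `0, 1, …, n-1` (vertex `i` represents the
vertex labelled `i+1` in `{1, …, n}`). -/
def CycleG (n : ℕ) : SimpleGraph (Fin n) where
  Adj i j := i ≠ j ∧ (((i : ℕ) + 1) % n = (j : ℕ) ∨ ((j : ℕ) + 1) % n = (i : ℕ))
  symm := ⟨fun i j h => ⟨h.1.symm, Or.symm h.2⟩⟩
  loopless := ⟨fun i h => h.1 rfl⟩

/-- The metric dimension of `G`: the minimum cardinality of a resolving set. -/
noncomputable def metricDim {α : Type*} [Fintype α] (G : SimpleGraph α) : ℕ :=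
  sInf {n | ∃ W : Finset α, W.card = n ∧ IsResolvingSet G ↑W}

/-- The set `W ⊆ Fin n` contains the vertex with underlying value `k`. -/
def valMem {n : ℕ} (W : Set (Fin n)) (k : ℕ) : Prop :=
  ∃ x ∈ W, (x : ℕ) = k


private lemma lex_walk_proj {α β : Type*} {G : SimpleGraph α} {H : SimpleGraph β}
    (hG : G.Connected) :
    ∀ {x y : α × β} (p : (lexProd G H).Walk x y), G.dist x.1 y.1 ≤ p.length := by
  intro x y p
  induction p with
  | nil => simp
  | @cons u v w hadj p ih =>
    rcases hadj with h | ⟨heq, -⟩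
    · calc G.dist u.1 w.1 ≤ G.dist u.1 v.1 + G.dist v.1 w.1 := hG.dist_triangle
        _ ≤ 1 + p.length := by
            have : G.dist u.1 v.1 ≤ 1 := by
              simpa using SimpleGraph.dist_le h.toWalk
            omega
        _ = (SimpleGraph.Walk.cons (Or.inl h) p).length := by
            change _ = p.length + 1; omega
    · have := ih
      rw [← heq] at this
      exact this.trans (Nat.le_succ _)

private lemma lex_walk_lift {α β : Type*} {G : SimpleGraph α} {H : SimpleGraph β} :
    ∀ {g g' : α} (p : G.Walk g g') (h h' : β), g ≠ g' →
      ∃ q : (lexProd G H).Walk (g, h) (g', h'), q.length ≤ p.length := by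
  intro g g' p
  induction p with
  | nil => intro h h' hne; exact absurd rfl hne
  | @cons u v w hadj p ih =>
    intro h h' _
    by_cases hv : v = w
    · subst hv
      exact ⟨SimpleGraph.Walk.cons (Or.inl hadj) SimpleGraph.Walk.nil, by
        exact Nat.succ_le_succ (Nat.zero_le _)⟩
    · obtain ⟨q, hq⟩ := ih h' h' hv
      exact ⟨SimpleGraph.Walk.cons (Or.inl hadj) q, by
        change q.length + 1 ≤ p.length + 1; omega⟩

private lemma lex_dist_cross {α β : Type*} {G : SimpleGraph α} (H : SimpleGraph β)
    (hG : G.Connected) {g g' : α} (h h' : β) (hne : g ≠ g') :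
    (lexProd G H).dist (g, h) (g', h') = G.dist g g' := by
  obtain ⟨p, hp⟩ := (hG g g').exists_walk_length_eq_dist
  obtain ⟨q, hq⟩ := lex_walk_lift (H := H) p h h' hne
  have hle : (lexProd G H).dist (g, h) (g', h') ≤ G.dist g g' :=
    (SimpleGraph.dist_le q).trans (hq.trans_eq hp)
  obtain ⟨r, hrlen⟩ := q.reachable.exists_walk_length_eq_dist
  have hge : G.dist g g' ≤ (lexProd G H).dist (g, h) (g', h') :=
    (lex_walk_proj hG r).trans_eq hrlen
  omega

private lemma lex_dist_same {α β : Type*} {G : SimpleGraph α} {H : SimpleGraph β}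
    (hG : G.Connected) (hH : H.Connected) [Nontrivial α] (g : α) (a b : β) :
    (lexProd G H).dist (g, a) (g, b) = min (H.dist a b) 2 := by
  by_cases hab : a = b
  · subst hab
    rw [SimpleGraph.dist_self, SimpleGraph.dist_self]
    simp
  obtain ⟨g0, hg0⟩ : ∃ g0, G.Adj g g0 := by
    obtain ⟨g1, hg1⟩ := exists_ne g
    obtain ⟨p, hp⟩ := (hG g g1).exists_walk_length_eq_dist
    cases p with
    | nil => exact absurd rfl (Ne.symm hg1)
    | cons h _ => exact ⟨_, h⟩
  have hwalk2 : (lexProd G H).dist (g, a) (g, b) ≤ 2 := by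
    exact (SimpleGraph.dist_le
      (SimpleGraph.Walk.cons (show (lexProd G H).Adj (g, a) (g0, a) from Or.inl hg0)
        (SimpleGraph.Walk.cons (show (lexProd G H).Adj (g0, a) (g, b) from Or.inl hg0.symm)
          SimpleGraph.Walk.nil))).trans_eq rfl
  have hne0 : (lexProd G H).dist (g, a) (g, b) ≠ 0 := by
    rw [SimpleGraph.dist_ne_zero_iff_ne_and_reachable]
    refine ⟨by simp [hab], ?_⟩
    exact SimpleGraph.Walk.reachable
      (SimpleGraph.Walk.cons (show (lexProd G H).Adj (g, a) (g0, a) from Or.inl hg0)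
        (SimpleGraph.Walk.cons (show (lexProd G H).Adj (g0, a) (g, b) from Or.inl hg0.symm)
          SimpleGraph.Walk.nil))
  have hHne0 : H.dist a b ≠ 0 := by
    rw [SimpleGraph.dist_ne_zero_iff_ne_and_reachable]
    exact ⟨hab, hH a b⟩
  by_cases hadj : H.Adj a b
  · have h1 : (lexProd G H).dist (g, a) (g, b) = 1 :=
      SimpleGraph.dist_eq_one_iff_adj.mpr (Or.inr ⟨rfl, hadj⟩)
    have h2 : H.dist a b = 1 := SimpleGraph.dist_eq_one_iff_adj.mpr hadj
    simp [h1, h2]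
  · have h1 : (lexProd G H).dist (g, a) (g, b) ≠ 1 := by
      simp only [ne_eq, SimpleGraph.dist_eq_one_iff_adj]
      rintro (h | ⟨-, h⟩)
      · exact G.irrefl h
      · exact hadj h
    have h2 : H.dist a b ≠ 1 := by
      simp only [ne_eq, SimpleGraph.dist_eq_one_iff_adj]; exact hadj
    have : (lexProd G H).dist (g, a) (g, b) = 2 := by omega
    rw [this]
    omega

/-- Every resolving set of `G ∘ H` intersects each `H`-layer in a resolving
set of `H`. -/
theorem stmt1 {α β : Type*} (G : SimpleGraph α) (H : SimpleGraph β)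
    (hG : G.Connected) (hH : H.Connected) [Nontrivial α] [Nontrivial β]
    (W : Set (α × β)) (hW : IsResolvingSet (lexProd G H) W) :
    ∀ g : α, IsResolvingSet H {h : β | (g, h) ∈ W} := by
  intro g h1 h2 hne
  obtain ⟨⟨g', h'⟩, hzW, hdist⟩ := hW (g, h1) (g, h2) (by simp [hne])
  by_cases hg : g' = g
  · subst hg
    refine ⟨h', hzW, ?_⟩
    intro heq
    apply hdist
    rw [lex_dist_same hG hH, lex_dist_same hG hH, heq]
  · exfalso
    apply hdist
    rw [lex_dist_cross H hG h1 h' (Ne.symm hg), lex_dist_cross H hG h2 h' (Ne.symm hg)]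
end

section
/- Let G be a connected graph with at least two vertices that has no true twins, and let K_2 be the complete graph with vertex set {1,2}. Then for every function k : V(G) → {1,2}, the set S = {(g, k(g)) : g ∈ V(G)} is a resolving set of the lexicographic product G∘K_2. -/
lemma fin2_trichot : ∀ a b c : Fin 2, a ≠ b → a ≠ c → b = c := by decide

open SimpleGraph in
lemma lift_walk {α : Type*} {G : SimpleGraph α} {g w : α} (p : G.Walk g w) :
    ∀ (h h2 : Fin 2), g ≠ w →
    ∃ q : (lexProd G (⊤ : SimpleGraph (Fin 2))).Walk (g,h) (w,h2), q.length ≤ p.length := by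
  induction p with
  | nil => intro h h2 hne; exact absurd rfl hne
  | @cons a b c e p ih =>
    intro h h2 hne
    by_cases hbc : b = c
    · subst hbc
      exact ⟨SimpleGraph.Walk.cons (Or.inl e) SimpleGraph.Walk.nil, by exact Nat.le_add_left 1 p.length⟩
    · obtain ⟨q, hq⟩ := ih h2 h2 hbc
      exact ⟨SimpleGraph.Walk.cons (Or.inl e) q,
        by exact Nat.succ_le_succ hq⟩

lemma proj_walk {α : Type*} {G : SimpleGraph α} {x y : α × Fin 2}
    (p : (lexProd G (⊤ : SimpleGraph (Fin 2))).Walk x y) :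
    ∃ q : G.Walk x.1 y.1, q.length ≤ p.length := by
  induction p with
  | nil => exact ⟨SimpleGraph.Walk.nil, le_rfl⟩
  | @cons a b c e p ih =>
    obtain ⟨q, hq⟩ := ih
    rcases e with he | ⟨heq, -⟩
    · exact ⟨SimpleGraph.Walk.cons he q,
        Nat.succ_le_succ hq⟩
    · exact ⟨q.copy heq.symm rfl,
        by rw [SimpleGraph.Walk.length_copy]; exact Nat.le_succ_of_le hq⟩

lemma lex_reach {α : Type*} {G : SimpleGraph α} (hG : G.Connected) (x y : α × Fin 2) :
    (lexProd G (⊤ : SimpleGraph (Fin 2))).Reachable x y := by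
  obtain ⟨g, h⟩ := x; obtain ⟨w, h2⟩ := y
  by_cases hgw : g = w
  · subst hgw
    by_cases hh : h = h2
    · subst hh; rfl
    · exact (SimpleGraph.Adj.reachable (Or.inr ⟨rfl, by simpa using hh⟩))
  · obtain ⟨p⟩ := hG.preconnected g w
    obtain ⟨q, -⟩ := lift_walk p h h2 hgw
    exact ⟨q⟩

lemma lex_dist_eq {α : Type*} {G : SimpleGraph α} (hG : G.Connected) {g w : α}
    (hne : g ≠ w) (h h2 : Fin 2) :
    (lexProd G (⊤ : SimpleGraph (Fin 2))).dist (g,h) (w,h2) = G.dist g w := by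
  apply le_antisymm
  · obtain ⟨p, hp⟩ := hG.exists_walk_length_eq_dist g w
    obtain ⟨q, hq⟩ := lift_walk p h h2 hne
    exact le_trans (SimpleGraph.dist_le q) (by omega)
  · obtain ⟨p, hp⟩ := (lex_reach hG (g,h) (w,h2)).exists_walk_length_eq_dist
    obtain ⟨q, hq⟩ := proj_walk p
    exact le_trans (SimpleGraph.dist_le q) (by omega)

lemma lex_dist_layer {α : Type*} {G : SimpleGraph α} {g : α} {h h2 : Fin 2}
    (hh : h ≠ h2) :
    (lexProd G (⊤ : SimpleGraph (Fin 2))).dist (g,h) (g,h2) = 1 :=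
  SimpleGraph.dist_eq_one_iff_adj.mpr (Or.inr ⟨rfl, by simpa using hh⟩)

/-- If `G` is connected, nontrivial, and free of true twins, then picking one
vertex from each `K₂`-layer yields a resolving set of `G ∘ K₂`. -/
theorem stmt4 {α : Type*} (G : SimpleGraph α) (hG : G.Connected) [Nontrivial α]
    (htf : ∀ u v : α, ¬ AreTrueTwins G u v) (k : α → Fin 2) :
    IsResolvingSet (lexProd G (⊤ : SimpleGraph (Fin 2)))
      (Set.range fun g => (g, k g)) := by
  rintro ⟨g, h⟩ ⟨g', h'⟩ hne
  by_cases hgg : g = g'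
  · subst hgg
    have hh : h ≠ h' := fun he => hne (by rw [he])
    refine ⟨(g, k g), ⟨g, rfl⟩, ?_⟩
    by_cases hk : h = k g
    · have hx : (lexProd G (⊤ : SimpleGraph (Fin 2))).dist (g,h) (g, k g) = 0 := by
        rw [hk, SimpleGraph.dist_self]
      have hy : (lexProd G (⊤ : SimpleGraph (Fin 2))).dist (g,h') (g, k g) = 1 :=
        lex_dist_layer (fun e => hh (hk.trans e.symm))
      omega
    · have hx : (lexProd G (⊤ : SimpleGraph (Fin 2))).dist (g,h) (g, k g) = 1 :=
        lex_dist_layer hk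
      have hk' : h' = k g := fin2_trichot h h' (k g) hh hk
      have hy : (lexProd G (⊤ : SimpleGraph (Fin 2))).dist (g,h') (g, k g) = 0 := by
        rw [hk', SimpleGraph.dist_self]
      omega
  · by_cases hadj : G.Adj g g'
    · have hset : G.neighborSet g \ {g'} ≠ G.neighborSet g' \ {g} :=
        fun he => htf g g' ⟨hadj, he⟩
      have hu : ∃ u, ¬ (u ∈ G.neighborSet g \ {g'} ↔ u ∈ G.neighborSet g' \ {g}) := by
        by_contra hc
        push_neg at hc
        exact hset (Set.ext fun u => hc u)
      obtain ⟨u, hu⟩ := hu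
      simp only [Set.mem_diff, SimpleGraph.mem_neighborSet, Set.mem_singleton_iff] at hu
      have e1 : G.Adj g u → u ≠ g := fun a => a.ne'
      have e2 : G.Adj g' u → u ≠ g' := fun a => a.ne'
      have hcases : (G.Adj g u ∧ u ≠ g' ∧ ¬ G.Adj g' u) ∨
          (G.Adj g' u ∧ u ≠ g ∧ ¬ G.Adj g u) := by tauto
      refine ⟨(u, k u), ⟨u, rfl⟩, ?_⟩
      rcases hcases with ⟨hgu, hug', hng'u⟩ | ⟨hg'u, hug, hngu⟩
      · rw [lex_dist_eq hG hgu.ne h (k u), lex_dist_eq hG (fun e => hug' e.symm) h' (k u)]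
        have d1 : G.dist g u = 1 := SimpleGraph.dist_eq_one_iff_adj.mpr hgu
        have d2 : G.dist g' u ≠ 1 := fun e => hng'u (SimpleGraph.dist_eq_one_iff_adj.mp e)
        have d3 : G.dist g' u ≠ 0 := fun e => hug' ((hG.dist_eq_zero_iff.mp e).symm)
        omega
      · rw [lex_dist_eq hG (fun e => hug e.symm) h (k u), lex_dist_eq hG hg'u.ne h' (k u)]
        have d1 : G.dist g' u = 1 := SimpleGraph.dist_eq_one_iff_adj.mpr hg'u
        have d2 : G.dist g u ≠ 1 := fun e => hngu (SimpleGraph.dist_eq_one_iff_adj.mp e)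
        have d3 : G.dist g u ≠ 0 := fun e => hug ((hG.dist_eq_zero_iff.mp e).symm)
        omega
    · have hyz : (lexProd G (⊤ : SimpleGraph (Fin 2))).dist (g', h') (g, k g) = G.dist g' g :=
        lex_dist_eq hG (Ne.symm hgg) h' (k g)
      have h2 : G.dist g' g ≠ 1 := fun e =>
        hadj ((SimpleGraph.dist_eq_one_iff_adj.mp e).symm)
      have h3 : G.dist g' g ≠ 0 := fun e => hgg ((hG.dist_eq_zero_iff.mp e).symm)
      refine ⟨(g, k g), ⟨g, rfl⟩, ?_⟩
      by_cases hk : h = k g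
      · have hx : (lexProd G (⊤ : SimpleGraph (Fin 2))).dist (g,h) (g, k g) = 0 := by
          rw [hk, SimpleGraph.dist_self]
        rw [hx, hyz]
        omega
      · rw [lex_dist_layer hk, hyz]
        omega
end

section
/- Let G be a connected graph with at least two vertices that has no true twins, and let K_2 be the complete graph on two vertices. Then the metric dimension of the lexicographic product G∘K_2 equals the number of vertices of G, i.e., dim(G∘K_2) = n(G). -/
open SimpleGraph

section AuxLemmas
variable {α : Type*}

lemma lex_lift (G : SimpleGraph α) (i j : Fin 2) :
    ∀ {g h : α}, g ≠ h → ∀ p : G.Walk g h,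
      ∃ w : (lexProd G (⊤ : SimpleGraph (Fin 2))).Walk (g, i) (h, j),
        w.length ≤ p.length := by
  intro g h hne p
  induction p with
  | nil => exact absurd rfl hne
  | @cons g g₁ h a p ih =>
    by_cases hgh : g₁ = h
    · subst hgh
      exact ⟨SimpleGraph.Walk.cons (Or.inl a : (lexProd G (⊤ : SimpleGraph (Fin 2))).Adj _ _) SimpleGraph.Walk.nil, by
        change 0 + 1 ≤ p.length + 1; omega⟩
    · obtain ⟨w, hw⟩ := ih hgh
      exact ⟨SimpleGraph.Walk.cons (Or.inl a : (lexProd G (⊤ : SimpleGraph (Fin 2))).Adj _ _) w, by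
        change w.length + 1 ≤ p.length + 1; omega⟩

lemma lex_proj (G : SimpleGraph α) (hG : G.Connected) :
    ∀ {x y : α × Fin 2} (w : (lexProd G (⊤ : SimpleGraph (Fin 2))).Walk x y),
      G.dist x.1 y.1 ≤ w.length := by
  intro x y w
  induction w with
  | nil => simp
  | @cons x z y a w ih =>
    rcases a with a | ⟨heq, -⟩
    · have h1 : G.dist x.1 z.1 = 1 := SimpleGraph.dist_eq_one_iff_adj.mpr a
      have h2 : G.dist x.1 y.1 ≤ G.dist x.1 z.1 + G.dist z.1 y.1 := hG.dist_triangle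
      change _ ≤ w.length + 1
      omega
    · change _ ≤ w.length + 1; rw [heq]
      exact le_trans ih (Nat.le_succ _)

lemma lex_dist (G : SimpleGraph α) (hG : G.Connected) {g h : α} (hne : g ≠ h) (i j : Fin 2) :
    (lexProd G (⊤ : SimpleGraph (Fin 2))).dist (g, i) (h, j) = G.dist g h := by
  obtain ⟨p, hp⟩ := (hG g h).exists_walk_length_eq_dist
  obtain ⟨w, hw⟩ := lex_lift G i j hne p
  apply le_antisymm
  · exact le_trans (SimpleGraph.dist_le w) (hp ▸ hw)
  · have hr : (lexProd G (⊤ : SimpleGraph (Fin 2))).Reachable (g, i) (h, j) := ⟨w⟩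
    obtain ⟨w', hw'⟩ := hr.exists_walk_length_eq_dist
    exact hw' ▸ lex_proj G hG w'

lemma lex_dist_col (G : SimpleGraph α) (g : α) {i j : Fin 2} (hij : i ≠ j) :
    (lexProd G (⊤ : SimpleGraph (Fin 2))).dist (g, i) (g, j) = 1 :=
  SimpleGraph.dist_eq_one_iff_adj.mpr (Or.inr ⟨rfl, by simpa using hij⟩)

end AuxLemmas

/-- If `G` is connected, nontrivial, and free of true twins, then
`dim(G ∘ K₂) = n(G)`. -/
theorem stmt5 {α : Type*} [Fintype α] (G : SimpleGraph α) (hG : G.Connected)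
    [Nontrivial α] (htf : ∀ u v : α, ¬ AreTrueTwins G u v) :
    metricDim (lexProd G (⊤ : SimpleGraph (Fin 2))) = Fintype.card α := by
  classical
  have hS : Fintype.card α ∈
      {n | ∃ W : Finset (α × Fin 2), W.card = n ∧
        IsResolvingSet (lexProd G (⊤ : SimpleGraph (Fin 2))) ↑W} := by
    refine ⟨Finset.univ.image (fun g => (g, (0 : Fin 2))), ?_, ?_⟩
    · rw [Finset.card_image_of_injective _ (fun a b h => congrArg Prod.fst h)]
      exact Finset.card_univ
    · rintro ⟨g, i⟩ ⟨g', i'⟩ hxy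
      have hmem : ∀ h : α, ((h, (0 : Fin 2)) : α × Fin 2) ∈
          (↑(Finset.univ.image (fun g : α => (g, (0 : Fin 2)))) : Set (α × Fin 2)) := by
        intro h; simp
      have hd : ∀ (a : α) (k : Fin 2) (h : α), a ≠ h →
          (lexProd G (⊤ : SimpleGraph (Fin 2))).dist (a, k) (h, 0) = G.dist a h :=
        fun a k h hne => lex_dist G hG hne k 0
      by_cases hgg : g = g'
      · subst hgg
        have hii : i ≠ i' := fun h => hxy (by rw [h])
        refine ⟨(g, 0), hmem g, ?_⟩
        fin_cases i <;> fin_cases i' <;>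
          simp_all [lex_dist_col, SimpleGraph.dist_self]
      · by_cases hadj : G.Adj g g'
        · -- no true twins gives a distinguishing vertex
          have hne : G.neighborSet g \ {g'} ≠ G.neighborSet g' \ {g} :=
            fun h => htf g g' ⟨hadj, h⟩
          have hex : ∃ u, u ≠ g ∧ u ≠ g' ∧ G.dist g u ≠ G.dist g' u := by
            have hdiff : ∃ u, (u ∈ G.neighborSet g \ {g'} ∧ u ∉ G.neighborSet g' \ {g}) ∨
                (u ∈ G.neighborSet g' \ {g} ∧ u ∉ G.neighborSet g \ {g'}) := by
              by_contra hc
              push_neg at hc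
              apply hne
              ext u
              have h1 := (hc u).1
              have h2 := (hc u).2
              exact ⟨h1, h2⟩
            obtain ⟨u, hu | hu⟩ := hdiff
            · obtain ⟨hus, hut⟩ := hu
              simp only [Set.mem_diff, SimpleGraph.mem_neighborSet,
                Set.mem_singleton_iff, not_and, not_not] at hus hut
              have hug : u ≠ g := (G.ne_of_adj hus.1).symm
              have hnadj : ¬ G.Adj g' u := fun h => hug (hut h)
              refine ⟨u, hug, hus.2, ?_⟩
              rw [SimpleGraph.dist_eq_one_iff_adj.mpr hus.1]
              exact fun h => hnadj (SimpleGraph.dist_eq_one_iff_adj.mp h.symm)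
            · obtain ⟨hus, hut⟩ := hu
              simp only [Set.mem_diff, SimpleGraph.mem_neighborSet,
                Set.mem_singleton_iff, not_and, not_not] at hus hut
              have hug : u ≠ g' := (G.ne_of_adj hus.1).symm
              have hnadj : ¬ G.Adj g u := fun h => hug (hut h)
              refine ⟨u, hus.2, hug, ?_⟩
              rw [SimpleGraph.dist_eq_one_iff_adj.mpr hus.1]
              exact fun h => hnadj (SimpleGraph.dist_eq_one_iff_adj.mp h)
          obtain ⟨u, hug, hug', hdu⟩ := hex
          refine ⟨(u, 0), hmem u, ?_⟩
          rw [hd g i u (Ne.symm hug), hd g' i' u (Ne.symm hug')]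
          exact hdu
        · refine ⟨(g, 0), hmem g, ?_⟩
          have hy : (lexProd G (⊤ : SimpleGraph (Fin 2))).dist (g', i') (g, 0)
              = G.dist g' g := hd g' i' g (Ne.symm hgg)
          have h0 : G.dist g' g ≠ 0 := (hG.pos_dist_of_ne (Ne.symm hgg)).ne'
          have h1 : G.dist g' g ≠ 1 :=
            fun h => hadj ((SimpleGraph.dist_eq_one_iff_adj.mp h).symm)
          have hx : (lexProd G (⊤ : SimpleGraph (Fin 2))).dist (g, i) (g, 0) ≤ 1 := by
            by_cases h : i = (0 : Fin 2)
            · subst h; rw [SimpleGraph.dist_self]; omega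
            · rw [lex_dist_col G g h]
          rw [hy]
          omega
  have hlow : ∀ n ∈ {n | ∃ W : Finset (α × Fin 2), W.card = n ∧
      IsResolvingSet (lexProd G (⊤ : SimpleGraph (Fin 2))) ↑W},
      Fintype.card α ≤ n := by
    rintro n ⟨W, rfl, hres⟩
    have hcol : ∀ g : α, (g, (0 : Fin 2)) ∈ W ∨ (g, (1 : Fin 2)) ∈ W := by
      intro g
      by_contra hc
      push_neg at hc
      obtain ⟨z, hzW, hz⟩ := hres (g, 0) (g, 1) (by simp)
      obtain ⟨h, k⟩ := z
      have hhg : g ≠ h := by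
        rintro rfl
        fin_cases k
        · exact hc.1 hzW
        · exact hc.2 hzW
      exact hz (by rw [lex_dist G hG hhg 0 k, lex_dist G hG hhg 1 k])
    set f : α → α × Fin 2 := fun g => if (g, 0) ∈ W then (g, (0 : Fin 2)) else (g, 1)
      with hf
    have hfst : ∀ g, (f g).1 = g := by
      intro g; rw [hf]; dsimp only; split <;> rfl
    have hfW : ∀ g, f g ∈ W := by
      intro g; rw [hf]; dsimp only; split
      · assumption
      · exact (hcol g).resolve_left (by assumption)
    have hfinj : Function.Injective f := fun a b h => by
      rw [← hfst a, ← hfst b, h]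
    calc Fintype.card α = (Finset.univ.image f).card := by
          rw [Finset.card_image_of_injective _ hfinj, Finset.card_univ]
      _ ≤ W.card := Finset.card_le_card (by
          intro x hx
          simp only [Finset.mem_image, Finset.mem_univ, true_and] at hx
          obtain ⟨g, rfl⟩ := hx
          exact hfW g)
  unfold metricDim
  exact le_antisymm (Nat.sInf_le hS) (le_csInf ⟨_, hS⟩ hlow)
end

section
/- Let G be a connected graph with at least two vertices in which no two distinct vertices are twins, and let P_3 be the path with vertex set {1,2,3}. Then for every function s : V(G) → {1,3}, the set S = {(g, s(g)) : g ∈ V(G)} is a resolving set of the lexicographic product G∘P_3. -/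
/-- If `G` is connected, nontrivial and twin-free, then picking the first or
the third vertex from each `P₃`-layer yields a resolving set of `G ∘ P₃`.
(Vertices `1` and `3` of `P₃` are `0` and `2` in the `Fin 3` labelling.) -/
theorem stmt6 {α : Type*} (G : SimpleGraph α) (hG : G.Connected) [Nontrivial α]
    (htf : ∀ u v : α, u ≠ v → G.neighborSet u \ {v} ≠ G.neighborSet v \ {u})
    (s : α → Fin 3) (hs : ∀ g : α, s g = 0 ∨ s g = 2) :
    IsResolvingSet (lexProd G (PathG 3)) (Set.range fun g => (g, s g)) := by
  
  intro x y hxy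
  obtain ⟨g, h⟩ := x
  obtain ⟨g', h'⟩ := y
  by_cases hg : g = g'
  · -- same G-layer: witness (g, s g)
    subst hg
    have hh : h ≠ h' := by
      intro hc; exact hxy (by rw [hc])
    refine ⟨(g, s g), ⟨g, rfl⟩, ?_⟩
    -- reachability facts inside a layer
    have p01 : (PathG 3).Adj 0 1 := Or.inl rfl
    have p12 : (PathG 3).Adj 1 2 := Or.inl rfl
    have np02 : ¬ (PathG 3).Adj 0 2 := by rintro (h | h) <;> revert h <;> decide
    have adj01 : (lexProd G (PathG 3)).Adj (g, (0 : Fin 3)) (g, 1) :=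
      Or.inr ⟨rfl, p01⟩
    have adj12 : (lexProd G (PathG 3)).Adj (g, (1 : Fin 3)) (g, 2) :=
      Or.inr ⟨rfl, p12⟩
    have nadj02 : ¬ (lexProd G (PathG 3)).Adj (g, (0 : Fin 3)) (g, 2) := by
      rintro (hc | ⟨-, hc⟩)
      · exact G.irrefl hc
      · exact np02 hc
    have reach02 : (lexProd G (PathG 3)).Reachable (g, (0 : Fin 3)) (g, 2) :=
      (adj01.reachable).trans adj12.reachable
    have d01 : (lexProd G (PathG 3)).dist (g, (0 : Fin 3)) (g, 1) = 1 :=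
      SimpleGraph.dist_eq_one_iff_adj.mpr adj01
    have d10 : (lexProd G (PathG 3)).dist (g, (1 : Fin 3)) (g, 0) = 1 :=
      SimpleGraph.dist_eq_one_iff_adj.mpr adj01.symm
    have d12 : (lexProd G (PathG 3)).dist (g, (1 : Fin 3)) (g, 2) = 1 :=
      SimpleGraph.dist_eq_one_iff_adj.mpr adj12
    have d21 : (lexProd G (PathG 3)).dist (g, (2 : Fin 3)) (g, 1) = 1 :=
      SimpleGraph.dist_eq_one_iff_adj.mpr adj12.symm
    have d20ne1 : (lexProd G (PathG 3)).dist (g, (2 : Fin 3)) (g, 0) ≠ 1 := by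
      intro hc
      exact nadj02 (SimpleGraph.dist_eq_one_iff_adj.mp hc).symm
    have d02ne1 : (lexProd G (PathG 3)).dist (g, (0 : Fin 3)) (g, 2) ≠ 1 := by
      intro hc
      exact nadj02 (SimpleGraph.dist_eq_one_iff_adj.mp hc)
    have d20ne0 : (lexProd G (PathG 3)).dist (g, (2 : Fin 3)) (g, 0) ≠ 0 := by
      intro hc
      have := reach02.symm.dist_eq_zero_iff.mp hc
      simpa using this
    have d02ne0 : (lexProd G (PathG 3)).dist (g, (0 : Fin 3)) (g, 2) ≠ 0 := by
      intro hc
      have := reach02.dist_eq_zero_iff.mp hc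
      simpa using this
    have dself : ∀ k : Fin 3, (lexProd G (PathG 3)).dist (g, k) (g, k) = 0 :=
      fun k => SimpleGraph.dist_self
    have hcases : ∀ k : Fin 3, k = 0 ∨ k = 1 ∨ k = 2 := by decide
    rcases hs g with hsg | hsg <;> rw [hsg] <;>
      rcases hcases h with rfl | rfl | rfl <;>
      rcases hcases h' with rfl | rfl | rfl <;>
      simp only [d01, d10, d12, d21, dself, ne_eq] <;>
      first
        | exact absurd rfl hh
        | omega
        | (intro hc; exact d20ne1 hc.symm)
        | (intro hc; exact d02ne1 hc.symm)
        | (intro hc; exact d20ne0 hc.symm)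
        | (intro hc; exact d02ne0 hc.symm)
        | exact d20ne1
        | exact d02ne1
        | exact d20ne0
        | exact d02ne0
  · -- different G-layers: use twin-freeness
    have key : ∀ (u u' : α) (p q : α × Fin 3), p.1 = u → q.1 = u' →
        (∃ a, G.Adj u a ∧ ¬ G.Adj u' a ∧ a ≠ u') →
        ∃ z ∈ Set.range (fun g => (g, s g)),
          (lexProd G (PathG 3)).dist p z ≠ (lexProd G (PathG 3)).dist q z := by
      rintro u u' ⟨u1, h1⟩ ⟨u2, h2⟩ rfl rfl ⟨a, ha1, ha2, ha3⟩
      refine ⟨(a, s a), ⟨a, rfl⟩, ?_⟩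
      have dp : (lexProd G (PathG 3)).dist (u1, h1) (a, s a) = 1 :=
        SimpleGraph.dist_eq_one_iff_adj.mpr (Or.inl ha1)
      rw [dp]
      intro hc
      rcases SimpleGraph.dist_eq_one_iff_adj.mp hc.symm with hadj | ⟨heq, -⟩
      · exact ha2 hadj
      · exact ha3 heq.symm
    have hne := htf g g' hg
    have : ∃ a, ¬ (a ∈ G.neighborSet g \ {g'} ↔ a ∈ G.neighborSet g' \ {g}) := by
      by_contra hc
      push_neg at hc
      exact hne (Set.ext hc)
    obtain ⟨a, ha⟩ := this
    by_cases hm : a ∈ G.neighborSet g \ {g'}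
    · have hm' : a ∉ G.neighborSet g' \ {g} := fun hc => ha ⟨fun _ => hc, fun _ => hm⟩
      obtain ⟨hadj, hane⟩ := hm
      have hnadj : ¬ G.Adj g' a := by
        intro hc
        exact hm' ⟨hc, fun hc2 => G.ne_of_adj hadj hc2.symm⟩
      exact key g g' _ _ rfl rfl ⟨a, hadj, hnadj, hane⟩
    · have hm' : a ∈ G.neighborSet g' \ {g} := by
        by_contra hc
        exact ha ⟨fun h => absurd h hm, fun h => absurd h hc⟩
      obtain ⟨hadj, hane⟩ := hm'
      have hnadj : ¬ G.Adj g a := by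
        intro hc
        exact hm ⟨hc, fun hc2 => G.ne_of_adj hadj hc2.symm⟩
      obtain ⟨z, hz, hd⟩ := key g' g (g', h') (g, h) rfl rfl ⟨a, hadj, hnadj, hane⟩
      exact ⟨z, hz, hd.symm⟩
end
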